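/- arXiv:1812.01552 — 3 statements merged into one kernel-verified Lean document; each statement's English description precedes it below -/
import Mathlib

section
/- Let λ > 0, N > 0, Q ∈ ℝ, ρ > 0, and let v be the constant function v(x) = Q²/(2ρN) + (λ/(2ρ))(ln(2πeλ/N) - 1). Then v satisfies the HJB equation ρ v(x) = (CDx v''(x) + B v'(x) - Q)²/(2(N - D² v''(x))) + (λ/2)(ln(2πeλ/(N - D² v''(x))) - 1) + (1/2) C² x² v''(x) + A x v'(x) for all x ∈ ℝ and any constants A, B, C, D ∈ ℝ. -/
open Real

/-- The constant function `v(x) = Q²/(2ρN) + (λ/(2ρ))(ln(2πeλ/N) - 1)` satisfies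
the HJB equation of the entropy-regularized LQ problem with state-independent
reward, for any coefficients `A, B, C, D`. -/
theorem stmt_4 (lam N Q ρ A B C D : ℝ) (hlam : 0 < lam) (hN : 0 < N) (hρ : 0 < ρ) :
    let v : ℝ → ℝ := fun _ =>
      Q ^ 2 / (2 * ρ * N) +
        lam / (2 * ρ) * (Real.log (2 * Real.pi * Real.exp 1 * lam / N) - 1)
    ∀ x : ℝ,
      ρ * v x =
        (C * D * x * deriv (deriv v) x + B * deriv v x - Q) ^ 2 /
            (2 * (N - D ^ 2 * deriv (deriv v) x)) +
          lam / 2 *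
            (Real.log (2 * Real.pi * Real.exp 1 * lam / (N - D ^ 2 * deriv (deriv v) x)) - 1) +
          1 / 2 * C ^ 2 * x ^ 2 * deriv (deriv v) x + A * x * deriv v x := by
  intro v x
  have h1 : deriv v = fun _ => (0 : ℝ) := by
    funext y; exact deriv_const y _
  rw [h1]
  have h2 : deriv (fun _ : ℝ => (0 : ℝ)) = fun _ => (0 : ℝ) := by
    funext y; exact deriv_const y _
  rw [h2]
  simp only [v]
  field_simp [hN.ne', hρ.ne']
  ring
end

section
/- Let M ≥ 0, N > 0, R, P, Q, A, B, C, D ∈ ℝ with R² < MN, and suppose ρ > 2A + C² + max((D²R² - 2NR(B+CD))/N, 0). Define k₂ = (1/2)·[(ρ-(2A+C²))N + 2(B+CD)R - D²M - √(((ρ-(2A+C²))N + 2(B+CD)R - D²M)² - 4((B+CD)² + (ρ-(2A+C²))D²)(R²-MN))] / ((B+CD)² + (ρ-(2A+C²))D²), assuming (B+CD)² + (ρ-(2A+C²))D² ≠ 0. Then k₂ < 0 and k₂ satisfies the quadratic equation ρ k₂ = (k₂(B+CD) - R)²/(N - k₂D²) + k₂(2A + C²) - M, and moreover N - k₂D²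 > 0. -/
open Real

/-- The explicit root `k₂` of the Riccati-type quadratic equation for the
entropy-regularized LQ problem: `k₂ < 0`, it satisfies the quadratic equation,
and `N - k₂D² > 0`. -/
theorem stmt_5 (M N R P Q A B C D ρ : ℝ) (hM : 0 ≤ M) (hN : 0 < N)
    (hR : R ^ 2 < M * N)
    (hρ : ρ > 2 * A + C ^ 2 + max ((D ^ 2 * R ^ 2 - 2 * N * R * (B + C * D)) / N) 0)
    (hden : (B + C * D) ^ 2 + (ρ - (2 * A + C ^ 2)) * D ^ 2 ≠ 0) :
    let k₂ : ℝ :=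
      1 / 2 * ((ρ - (2 * A + C ^ 2)) * N + 2 * (B + C * D) * R - D ^ 2 * M -
          Real.sqrt (((ρ - (2 * A + C ^ 2)) * N + 2 * (B + C * D) * R - D ^ 2 * M) ^ 2 -
            4 * ((B + C * D) ^ 2 + (ρ - (2 * A + C ^ 2)) * D ^ 2) * (R ^ 2 - M * N))) /
        ((B + C * D) ^ 2 + (ρ - (2 * A + C ^ 2)) * D ^ 2)
    k₂ < 0 ∧
    ρ * k₂ = (k₂ * (B + C * D) - R) ^ 2 / (N - k₂ * D ^ 2) + k₂ * (2 * A + C ^ 2) - M ∧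
    0 < N - k₂ * D ^ 2 := by
  intro k₂
  have hr0 : 0 < ρ - (2 * A + C ^ 2) := by
    have h := le_max_right ((D ^ 2 * R ^ 2 - 2 * N * R * (B + C * D)) / N) (0:ℝ)
    linarith
  have hk : k₂ = 1 / 2 * ((ρ - (2 * A + C ^ 2)) * N + 2 * (B + C * D) * R - D ^ 2 * M -
      Real.sqrt (((ρ - (2 * A + C ^ 2)) * N + 2 * (B + C * D) * R - D ^ 2 * M) ^ 2 -
        4 * ((B + C * D) ^ 2 + (ρ - (2 * A + C ^ 2)) * D ^ 2) * (R ^ 2 - M * N))) /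
      ((B + C * D) ^ 2 + (ρ - (2 * A + C ^ 2)) * D ^ 2) := rfl
  clear_value k₂
  obtain ⟨s, hs⟩ : ∃ x : ℝ, x = (ρ - (2 * A + C ^ 2)) * N + 2 * (B + C * D) * R - D ^ 2 * M :=
    ⟨_, rfl⟩
  obtain ⟨a, haa⟩ : ∃ x : ℝ, x = (B + C * D) ^ 2 + (ρ - (2 * A + C ^ 2)) * D ^ 2 := ⟨_, rfl⟩
  rw [← hs, ← haa] at hk
  have ha : 0 < a := by
    rcases lt_or_eq_of_le (show (0:ℝ) ≤ a by rw [haa]; nlinarith [sq_nonneg (B + C * D), sq_nonneg D]) with h | h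
    · exact h
    · exact absurd (haa ▸ h.symm) hden
  have hMN : 0 < M * N - R ^ 2 := by linarith
  have hΔ0 : 0 ≤ s ^ 2 - 4 * a * (R ^ 2 - M * N) := by nlinarith [sq_nonneg s]
  obtain ⟨t, htd⟩ : ∃ x : ℝ, x = Real.sqrt (s ^ 2 - 4 * a * (R ^ 2 - M * N)) := ⟨_, rfl⟩
  rw [← htd] at hk
  have ht : t ^ 2 = s ^ 2 - 4 * a * (R ^ 2 - M * N) := by rw [htd]; exact Real.sq_sqrt hΔ0
  have ht0 : 0 ≤ t := htd ▸ Real.sqrt_nonneg _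
  have hst : s < t := by nlinarith
  have hk0 : k₂ < 0 := by
    rw [hk]
    apply div_neg_of_neg_of_pos _ ha
    linarith
  have hpos : 0 < N - k₂ * D ^ 2 := by nlinarith [sq_nonneg D]
  have hq : a * k₂ ^ 2 - s * k₂ + (R ^ 2 - M * N) = 0 := by
    rw [hk]
    field_simp
    linear_combination ht
  have h2 : (ρ * k₂ - (k₂ * (2 * A + C ^ 2) - M)) * (N - k₂ * D ^ 2) =
      (k₂ * (B + C * D) - R) ^ 2 := by
    linear_combination -hq + k₂ ^ 2 * haa - k₂ * hs
  refine ⟨hk0, ?_, hpos⟩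
  have h3 : ρ * k₂ - (k₂ * (2 * A + C ^ 2) - M) = (k₂ * (B + C * D) - R) ^ 2 / (N - k₂ * D ^ 2) :=
    (eq_div_iff hpos.ne').mpr h2
  linarith
end

section
/- Let α₂ < 0, N > 0, λ > 0, D ∈ ℝ, ρ > 0, and α₀, α₁ ∈ ℝ. Define w(x) = (1/2)α₂x² + α₁x + α₀ and v(x) = w(x) + (λ/(2ρ))(ln(2πeλ/(N - α₂D²)) - 1). Then w satisfies the classical HJB equation ρw(x) = (CDx w'' + B w' - Rx - Q)²/(2(N - D²w'')) + (1/2)(C²w'' - M)x² + (Aw' - P)x for all x if and only if v satisfies the exploratory HJB equation ρv(x) = (CDx v'' + B v' - Rx - Q)²/(2(N - D²v'')) + (λ/2)(ln(2πeλ/(N - D²v'')) - 1) + (1/2)(C²v'' - M)x² + (Av' - P)x for all x. -/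
open Real

lemma deriv_quad (a b c : ℝ) :
    deriv (fun x : ℝ => 1 / 2 * a * x ^ 2 + b * x + c) = fun x => a * x + b := by
  funext x
  have h1 : HasDerivAt (fun x : ℝ => 1 / 2 * a * x ^ 2 + b * x + c) (a * x + b) x := by
    have := ((hasDerivAt_pow 2 x).const_mul (1/2*a)).add
      (((hasDerivAt_id x).const_mul b).add_const c)
    convert this using 1
    · rfl
    · rfl
    · ext y; simp only [Pi.add_apply, id_eq]; ring
    · simp; ring
  exact h1.deriv

lemma deriv_lin (a b : ℝ) :
    deriv (fun x : ℝ => a * x + b) = fun _ => a := by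
  funext x
  have := (((hasDerivAt_id x).const_mul a).add_const b).deriv
  simpa using this

/-- Solvability equivalence: the quadratic `w` solves the classical LQ HJB
equation iff its constant shift `v = w + (λ/(2ρ))(ln(2πeλ/(N - α₂D²)) - 1)`
solves the exploratory (entropy-regularized) LQ HJB equation. -/
theorem stmt_7 (M N R P Q A B C D ρ lam α₀ α₁ α₂ : ℝ)
    (hα₂ : α₂ < 0) (hN : 0 < N) (hlam : 0 < lam) (hρ : 0 < ρ) :
    let w : ℝ → ℝ := fun x => 1 / 2 * α₂ * x ^ 2 + α₁ * x + α₀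
    let v : ℝ → ℝ := fun x => w x +
      lam / (2 * ρ) * (Real.log (2 * Real.pi * Real.exp 1 * lam / (N - α₂ * D ^ 2)) - 1)
    (∀ x : ℝ,
      ρ * w x =
        (C * D * x * deriv (deriv w) x + B * deriv w x - R * x - Q) ^ 2 /
            (2 * (N - D ^ 2 * deriv (deriv w) x)) +
          1 / 2 * (C ^ 2 * deriv (deriv w) x - M) * x ^ 2 +
          (A * deriv w x - P) * x) ↔
    (∀ x : ℝ,
      ρ * v x =
        (C * D * x * deriv (deriv v) x + B * deriv v x - R * x - Q) ^ 2 /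
            (2 * (N - D ^ 2 * deriv (deriv v) x)) +
          lam / 2 *
            (Real.log (2 * Real.pi * Real.exp 1 * lam / (N - D ^ 2 * deriv (deriv v) x)) - 1) +
          1 / 2 * (C ^ 2 * deriv (deriv v) x - M) * x ^ 2 +
          (A * deriv v x - P) * x) := by
  intro w v
  have hw1 : deriv w = fun x => α₂ * x + α₁ := deriv_quad α₂ α₁ α₀
  have hw2 : deriv (deriv w) = fun _ => α₂ := by rw [hw1]; exact deriv_lin α₂ α₁
  have hv1 : deriv v = fun x => α₂ * x + α₁ := by
    have : v = fun x => 1 / 2 * α₂ * x ^ 2 + α₁ * x +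
        (α₀ + lam / (2 * ρ) * (Real.log (2 * Real.pi * Real.exp 1 * lam / (N - α₂ * D ^ 2)) - 1)) := by
      funext x; simp only [v, w]; ring
    rw [this]; exact deriv_quad _ _ _
  have hv2 : deriv (deriv v) = fun _ => α₂ := by rw [hv1]; exact deriv_lin α₂ α₁
  simp only [hw2, hv2, hw1, hv1, deriv_lin]
  have hρ' : ρ ≠ 0 := ne_of_gt hρ
  have hcomm : N - D ^ 2 * α₂ = N - α₂ * D ^ 2 := by ring
  have key : ρ * (lam / (2 * ρ) * (Real.log (2 * Real.pi * Real.exp 1 * lam / (N - α₂ * D ^ 2)) - 1))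
      = lam / 2 * (Real.log (2 * Real.pi * Real.exp 1 * lam / (N - α₂ * D ^ 2)) - 1) := by
    field_simp
  constructor <;> intro h x <;> have hx := h x <;> simp only [v, w] at *
  · rw [hcomm] at hx
    rw [hcomm]
    linarith [key]
  · rw [hcomm]
    rw [hcomm] at hx
    linarith [key]
end
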